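/- arXiv:1707.09418 — 3 statements merged into one kernel-verified Lean document; each statement's English description precedes it below -/
import Mathlib

section
/- Let p_1, …, p_n be pairwise coprime positive integers, let 1 ≤ k ≤ n, and let M be a positive integer such that M ≤ ∏_{i ∈ S} p_i for every subset S ⊆ {1, …, n} with |S| = k. Define φ(m) = (m mod p_1, …, m mod p_n). Then for any two distinct natural numbers m, m' with 0 ≤ m, m' < M, the Hamming distance between φ(m) and φ(m') is at least n − k + 1; i.e., the minimum Hamming distance of the Chinese Remainder Code {φ(m) : 0 ≤ m < M} is at least n − k + 1. -/
/-- **Minimum-distance lower bound of the Chinese Remainder Code.**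
With pairwise coprime positive moduli `p i` and `M` not exceeding the product
of any `k` of the moduli, the encodings `φ m = (m % p 1, …, m % p n)` of any
two distinct `m, m' < M` are at Hamming distance at least `n - k + 1`. -/
theorem crc_min_hamming_distance
    (n : ℕ) (p : Fin n → ℕ)
    (hpos : ∀ i, 0 < p i)
    (hcop : ∀ i j, i ≠ j → Nat.Coprime (p i) (p j))
    (k : ℕ) (hk1 : 1 ≤ k) (hkn : k ≤ n)
    (M : ℕ) (hMpos : 0 < M)
    (hM : ∀ S : Finset (Fin n), S.card = k → M ≤ ∏ i ∈ S, p i)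
    (m m' : ℕ) (hm : m < M) (hm' : m' < M) (hne : m ≠ m') :
    n - k + 1 ≤
      hammingDist (fun i : Fin n => m % p i) (fun i : Fin n => m' % p i) := by
  classical
  set A : Finset (Fin n) := Finset.univ.filter (fun i => m % p i = m' % p i) with hA
  -- each p i for i ∈ A divides (m - m' : ℤ)
  have hdvd : ∀ i ∈ A, (p i : ℤ) ∣ (m : ℤ) - m' := by
    intro i hi
    have h : m % p i = m' % p i := by simpa [hA] using hi
    have := Nat.ModEq.dvd (h : m ≡ m' [MOD p i])
    have h2 : (p i : ℤ) ∣ (m' : ℤ) - m := this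
    exact (dvd_sub_comm).mp h2
  have hdvd' : ∀ i ∈ A, (p i : ℤ) ∣ (m : ℤ) - m' := hdvd
  have hprod : (∏ i ∈ A, (p i : ℤ)) ∣ (m : ℤ) - m' := by
    apply Finset.prod_dvd_of_coprime
    · intro i hi j hj hij
      exact (Nat.isCoprime_iff_coprime).2 (hcop i j hij)
    · exact hdvd
  have hAcard : A.card < k := by
    by_contra hle
    push_neg at hle
    obtain ⟨S, hSA, hScard⟩ := Finset.exists_subset_card_eq hle
    have hMS := hM S hScard
    have hSle : (∏ i ∈ S, p i) ≤ ∏ i ∈ A, p i :=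
      Finset.prod_le_prod_of_subset_of_one_le' hSA (fun i _ _ => hpos i)
    have hd0 : (m : ℤ) - m' ≠ 0 := by
      intro h
      exact hne (by exact_mod_cast sub_eq_zero.mp h)
    have habs : (∏ i ∈ A, (p i : ℤ)) ≤ |(m : ℤ) - m'| :=
      Int.le_of_dvd (abs_pos.mpr hd0) ((dvd_abs _ _).mpr hprod)
    have hlt : |(m : ℤ) - m'| < M := by
      rw [abs_sub_lt_iff]
      constructor <;> [skip; skip] <;>
        · have : (m : ℤ) < M := by exact_mod_cast hm
          have : (m' : ℤ) < M := by exact_mod_cast hm'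
          omega
    have : (M : ℤ) ≤ ∏ i ∈ A, (p i : ℤ) := by
      push_cast
      exact_mod_cast le_trans (Nat.cast_le.mpr (le_trans hMS hSle)) le_rfl
    omega
  have hham : hammingDist (fun i : Fin n => m % p i) (fun i : Fin n => m' % p i)
      = n - A.card := by
    rw [hammingDist]
    have : (Finset.univ.filter fun i : Fin n => m % p i ≠ m' % p i) = Aᶜ := by
      ext i; simp [hA]
    rw [this, Finset.card_compl, Fintype.card_fin]
  omega
end

section
/- Let p_1 ≤ p_2 ≤ … ≤ p_n be pairwise coprime integers with p_i ≥ 2 for all i, let 1 ≤ k ≤ n, and let M = p_1 · p_2 ⋯ p_k. Define φ(m) = (m mod p_1, …, m mod p_n). Then there exist distinct natural numbers m, m' with 0 ≤ m, m' < M whose images φ(m) and φ(m') are at Hamming distance exactly n − k + 1; together with the lower bound n − k + 1, the minimum Hamming distance of the code {φ(m) : 0 ≤ m < M} equals n − k + 1. (Take m = 0 and m' = p_1 ⋯ p_{k−1}.) -/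
open Finset

private lemma fin_strictMono_le {k n : ℕ} (f : Fin k → Fin n) (hf : StrictMono f)
    (j : Fin k) : (j : ℕ) ≤ (f j : ℕ) := by
  obtain ⟨j, hj⟩ := j
  induction j with
  | zero => exact Nat.zero_le _
  | succ j ih =>
    have h1 : f ⟨j, by omega⟩ < f ⟨j + 1, hj⟩ := hf (by simp [Fin.lt_def])
    have h2 := ih (by omega)
    simp only [Fin.lt_def] at h1
    simp only [Fin.val_mk] at h1 h2 ⊢
    omega

private lemma filter_lt_eq_image {n a : ℕ} (h : a ≤ n) :
    (univ.filter (fun i : Fin n => (i : ℕ) < a)) =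
      (univ : Finset (Fin a)).image (Fin.castLE h) := by
  ext i
  simp only [mem_filter, mem_univ, true_and, mem_image]
  constructor
  · intro hi; exact ⟨⟨i, hi⟩, Fin.ext rfl⟩
  · rintro ⟨j, rfl⟩; exact j.2

private lemma card_filter_lt {n a : ℕ} (h : a ≤ n) :
    (univ.filter (fun i : Fin n => (i : ℕ) < a)).card = a := by
  rw [filter_lt_eq_image h, Finset.card_image_of_injective _ (Fin.castLE_injective h)]
  simp

/-- the product of `p` over any `k`-element set dominates the product over the first `k`. -/
private lemma prod_first_le {n k : ℕ} (hkn : k ≤ n) (p : Fin n → ℕ) (hmono : Monotone p)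
    (S : Finset (Fin n)) (hS : S.card = k) :
    (∏ i ∈ univ.filter (fun i : Fin n => (i : ℕ) < k), p i) ≤ ∏ i ∈ S, p i := by
  have hrange : (univ : Finset (Fin k)).image (S.orderEmbOfFin hS) = S := by
    apply Finset.coe_injective
    rw [Finset.coe_image, Finset.coe_univ, Set.image_univ, Finset.range_orderEmbOfFin]
  have h1 : ∏ j : Fin k, p (S.orderEmbOfFin hS j) = ∏ i ∈ S, p i := by
    conv_rhs => rw [← hrange]
    exact (Finset.prod_image (fun a _ b _ hab => (S.orderEmbOfFin hS).injective hab)).symm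
  have h2 : (∏ i ∈ univ.filter (fun i : Fin n => (i : ℕ) < k), p i)
      = ∏ j : Fin k, p (Fin.castLE hkn j) := by
    rw [filter_lt_eq_image hkn]
    exact Finset.prod_image (fun a _ b _ hab => Fin.castLE_injective hkn hab)
  rw [← h1, h2]
  apply Finset.prod_le_prod'
  intro j _
  apply hmono
  rw [Fin.le_def]
  simpa using fin_strictMono_le _ (S.orderEmbOfFin hS).strictMono j

/-- **The minimum Hamming distance of the Chinese Remainder Code is exactly
`n - k + 1`** (Goldreich et al.). For sorted pairwise coprime moduli
`2 ≤ p 1 ≤ … ≤ p n` and `M = p 1 ⋯ p k` the product of the `k` smallest, there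
exist distinct `m, m' < M` whose encodings are at Hamming distance exactly
`n - k + 1`, while any two distinct encodings are at distance at least
`n - k + 1`. -/
theorem crc_min_hamming_distance_eq
    (n : ℕ) (p : Fin n → ℕ)
    (h2 : ∀ i, 2 ≤ p i)
    (hmono : Monotone p)
    (hcop : ∀ i j, i ≠ j → Nat.Coprime (p i) (p j))
    (k : ℕ) (hk1 : 1 ≤ k) (hkn : k ≤ n)
    (M : ℕ) (hM : M = ∏ i ∈ Finset.univ.filter (fun i : Fin n => (i : ℕ) < k), p i) :
    (∃ m m' : ℕ, m < M ∧ m' < M ∧ m ≠ m' ∧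
      hammingDist (fun i : Fin n => m % p i) (fun i : Fin n => m' % p i) =
        n - k + 1) ∧
    (∀ m m' : ℕ, m < M → m' < M → m ≠ m' →
      n - k + 1 ≤
        hammingDist (fun i : Fin n => m % p i) (fun i : Fin n => m' % p i)) := by
  constructor
  · -- existence of a pair at distance exactly n - k + 1
    set N : ℕ := ∏ i ∈ univ.filter (fun i : Fin n => (i : ℕ) < k - 1), p i with hN
    have hNpos : 0 < N := Finset.prod_pos (fun i _ => lt_of_lt_of_le two_pos (h2 i))
    have hik : k - 1 < n := by omega
    have hsplit : (univ.filter (fun i : Fin n => (i : ℕ) < k))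
        = insert ⟨k - 1, hik⟩ (univ.filter (fun i : Fin n => (i : ℕ) < k - 1)) := by
      ext i
      simp only [mem_filter, mem_univ, true_and, mem_insert, Fin.ext_iff]
      omega
    have hMN : M = p ⟨k - 1, hik⟩ * N := by
      rw [hM, hsplit, Finset.prod_insert]
      simp only [mem_filter, mem_univ, true_and]
      omega
    have hNM : N < M := by
      calc N < 2 * N := by omega
        _ ≤ p ⟨k - 1, hik⟩ * N := Nat.mul_le_mul_right N (h2 _)
        _ = M := hMN.symm
    refine ⟨0, N, by omega, hNM, by omega, ?_⟩
    have hdvd : ∀ i : Fin n, (i : ℕ) < k - 1 → p i ∣ N := by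
      intro i hi
      exact Finset.dvd_prod_of_mem p (by simp [hi])
    have hndvd : ∀ i : Fin n, k - 1 ≤ (i : ℕ) → ¬ p i ∣ N := by
      intro i hi hd
      have hco : Nat.Coprime (p i) N := by
        apply Nat.Coprime.prod_right
        intro j hj
        simp only [mem_filter, mem_univ, true_and] at hj
        exact hcop i j (by rintro rfl; omega)
      have h1 : p i ∣ 1 := hco ▸ Nat.dvd_gcd dvd_rfl hd
      have := Nat.le_of_dvd one_pos h1
      have := h2 i
      omega
    have hset : (univ.filter fun i : Fin n =>
        (fun i : Fin n => 0 % p i) i ≠ (fun i : Fin n => N % p i) i)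
        = univ.filter (fun i : Fin n => ¬ (i : ℕ) < k - 1) := by
      ext i
      have hpi : 0 < p i := lt_of_lt_of_le two_pos (h2 i)
      rw [Finset.mem_filter_univ, Finset.mem_filter_univ]
      simp only [mem_filter, mem_univ, true_and, Nat.zero_mod, ne_eq]
      constructor
      · intro h hi
        exact h ((Nat.mod_eq_zero_of_dvd (hdvd i hi)).symm)
      · intro hi h
        exact hndvd i (le_of_not_gt hi) (Nat.dvd_of_mod_eq_zero h.symm)
    show (univ.filter _).card = n - k + 1
    rw [hset, Finset.filter_not, Finset.card_sdiff_of_subset (Finset.filter_subset _ _),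
      Finset.card_univ, Fintype.card_fin, card_filter_lt (by omega)]
    omega
  · -- lower bound
    intro m m' hm hm' hne
    by_contra hcon
    push_neg at hcon
    set S : Finset (Fin n) := univ.filter (fun i : Fin n => m % p i = m' % p i) with hS
    have hD : (univ.filter fun i : Fin n =>
        (fun i : Fin n => m % p i) i ≠ (fun i : Fin n => m' % p i) i)
        = univ.filter (fun i : Fin n => ¬ (m % p i = m' % p i)) := by
      ext i; simp
    have h0 := Finset.card_filter_add_card_filter_not
      (s := (univ : Finset (Fin n))) (p := fun i : Fin n => m % p i = m' % p i)
    simp only [Finset.card_univ, Fintype.card_fin] at h0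
    have hdist : hammingDist (fun i : Fin n => m % p i) (fun i : Fin n => m' % p i)
        = (univ.filter fun i : Fin n =>
        (fun i : Fin n => m % p i) i ≠ (fun i : Fin n => m' % p i) i).card := rfl
    rw [hdist, hD] at hcon
    have hScard : k ≤ S.card := by rw [hS]; omega
    obtain ⟨T, hTS, hT⟩ := Finset.exists_subset_card_eq hScard
    have hTd : (∏ i ∈ T, (p i : ℤ)) ∣ (m' : ℤ) - m := by
      apply Finset.prod_dvd_of_coprime
      · intro i hi j hj hij
        exact Nat.isCoprime_iff_coprime.mpr (hcop i j hij)
      · intro i hi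
        have hiS : i ∈ S := hTS hi
        simp only [hS, mem_filter] at hiS
        exact (Nat.ModEq.dvd (hiS.2 : m ≡ m' [MOD p i]))
    have hMle : (M : ℤ) ≤ ∏ i ∈ T, (p i : ℤ) := by
      have h1 : M ≤ ∏ i ∈ T, p i := hM ▸ prod_first_le hkn p hmono T hT
      calc (M : ℤ) ≤ ((∏ i ∈ T, p i : ℕ) : ℤ) := by exact_mod_cast h1
        _ = ∏ i ∈ T, (p i : ℤ) := by push_cast; rfl
    have habs : (∏ i ∈ T, (p i : ℤ)) ∣ |(m' : ℤ) - m| := hTd.trans (self_dvd_abs _)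
    have hne' : (m' : ℤ) - m ≠ 0 := by
      intro h
      apply hne
      omega
    have hlt : |(m' : ℤ) - m| < M := by
      rw [abs_lt]
      omega
    have hle := Int.le_of_dvd (abs_pos.mpr hne') habs
    linarith
end

section
/- Let p_1, …, p_n be pairwise coprime positive integers, let 1 ≤ k ≤ n, and let M be a positive integer such that M ≤ ∏_{i ∈ S} p_i for every subset S ⊆ {1, …, n} with |S| = k. Define φ(m) = (m mod p_1, …, m mod p_n). Suppose 0 ≤ m < M and r̃ is an n-tuple with r̃_i ∈ {0, …, p_i − 1} for each i that differs from φ(m) in at most ⌊(n − k)/2⌋ coordinates. Then for every m' with 0 ≤ m' < M and m' ≠ m, one has H(φ(m'), r̃) > H(φ(m), r̃); hence m is the unique minimizer over [0, M) of the Hamming distance H(φ(·), r̃), and Hamming distance decoding of the Chinese Remainder Code recovers m despite up to ⌊(n − k)/2⌋ incorrectly recognized symbols. -/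
/-- **Error-correction guarantee of the Chinese Remainder Code.** With pairwise
coprime positive moduli `p i`, `M` not exceeding the product of any `k` of the
moduli, `m < M`, and a received tuple `r̃` (with `r̃ i < p i`) differing from
`φ m = (m % p 1, …, m % p n)` in at most `⌊(n - k)/2⌋` coordinates, the
encoding `φ m` is strictly closer to `r̃` than `φ m'` for every other
`m' < M`; hence Hamming decoding recovers `m` despite up to `⌊(n - k)/2⌋`
incorrectly recognized symbols. -/
theorem crc_error_correction
    (n : ℕ) (p : Fin n → ℕ)
    (hpos : ∀ i, 0 < p i)
    (hcop : ∀ i j, i ≠ j → Nat.Coprime (p i) (p j))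
    (k : ℕ) (hk1 : 1 ≤ k) (hkn : k ≤ n)
    (M : ℕ) (hMpos : 0 < M)
    (hM : ∀ S : Finset (Fin n), S.card = k → M ≤ ∏ i ∈ S, p i)
    (m : ℕ) (hm : m < M)
    (r : Fin n → ℕ) (hrange : ∀ i, r i < p i)
    (herr : hammingDist (fun i : Fin n => m % p i) r ≤ (n - k) / 2) :
    ∀ m' : ℕ, m' < M → m' ≠ m →
      hammingDist (fun i : Fin n => m % p i) r <
        hammingDist (fun i : Fin n => m' % p i) r := by
  intro m' hm' hne
  -- agreement set
  set A : Finset (Fin n) := Finset.univ.filter (fun i => m % p i = m' % p i) with hA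
  -- A has fewer than k elements
  have hAcard : A.card < k := by
    by_contra h
    push_neg at h
    obtain ⟨B, hBA, hBcard⟩ := Finset.exists_subset_card_eq h
    set z : ℤ := (m : ℤ) - m' with hz
    have hzne : z ≠ 0 := by
      simp only [hz, sub_ne_zero]
      exact fun h => hne (by exact_mod_cast h.symm)
    have hdvd : ∀ i ∈ A, (p i : ℤ) ∣ z := by
      intro i hi
      simp only [hA, Finset.mem_filter] at hi
      have : m ≡ m' [MOD p i] := hi.2
      exact Nat.modEq_iff_dvd.mp this.symm
    have hprod : ((∏ i ∈ A, p i : ℕ) : ℤ) ∣ z := by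
      push_cast
      refine Finset.prod_dvd_of_coprime ?_ (fun i hi => hdvd i hi)
      intro i hi j hj hij
      exact Int.isCoprime_iff_gcd_eq_one.mpr (by exact_mod_cast hcop i j hij)
    have hle : (∏ i ∈ A, p i) ≤ z.natAbs :=
      Nat.le_of_dvd (Int.natAbs_pos.mpr hzne)
        (Int.natCast_dvd_natCast.mp (by simpa using (Int.natAbs_dvd_natAbs.mpr hprod)))
    have hlt : z.natAbs < M := by
      rcases Int.natAbs_eq z with h | h <;> omega
    have hMB : M ≤ ∏ i ∈ B, p i := hM B hBcard
    have hBAle : (∏ i ∈ B, p i) ≤ ∏ i ∈ A, p i :=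
      Finset.prod_le_prod_of_subset_of_one_le' hBA (fun i _ _ => hpos i)
    omega
  -- Hamming distance between codewords is at least n - k + 1
  have hdist : n - A.card ≤ hammingDist (fun i : Fin n => m % p i) (fun i => m' % p i) := by
    have hsum := Finset.card_filter_add_card_filter_not
      (s := (Finset.univ : Finset (Fin n))) (p := fun i => m % p i = m' % p i)
    simp only [Finset.card_univ, Fintype.card_fin] at hsum
    rw [← hA] at hsum
    have heq : hammingDist (fun i : Fin n => m % p i) (fun i => m' % p i)
        = (Finset.univ.filter (fun i => ¬ m % p i = m' % p i)).card := by
      simp [hammingDist, ne_eq]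
    rw [heq]
    omega
  have htri := hammingDist_triangle (fun i : Fin n => m % p i) r (fun i => m' % p i)
  rw [hammingDist_comm r] at htri
  omega
end
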